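/- arXiv:0708.2462 — 2 statements merged into one kernel-verified Lean document; each statement's English description precedes it below -/
import Mathlib

section
/- Let G be an (αn, δc)-expander (c,d)-regular bipartite graph, with δc an integer, and let U ⊆ X be a set of left vertices with |U ∪ U̇| < αn, where U̇ = {v ∉ U : |Γ(v) ∩ Γ(U)| ≥ (1−λ)c + 1} and λc is an integer with λ < δ. Then there exists a set M of edges such that every vertex of U ∪ U̇ is incident with at least δc edges of M and every vertex of Γ(U ∪ U̇) is incident with at most one edge of M. -/
open Finset
open scoped Classical

theorem stmt_7 {X Y : Type*} [Fintype X] [Fintype Y]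
    (E : X → Y → Prop) (c d n : ℕ) (α δ lam : ℝ) (D L : ℕ)
    (hn : Fintype.card X = n)
    (hc : ∀ x : X, (Finset.univ.filter (fun y => E x y)).card = c)
    (hd : ∀ y : Y, (Finset.univ.filter (fun x => E x y)).card = d)
    (hexp : ∀ U : Finset X, (U.card : ℝ) < α * n →
      (δ * c * U.card : ℝ) ≤ ((Finset.univ.filter (fun y => ∃ x ∈ U, E x y)).card : ℝ))
    (hD : (D : ℝ) = δ * c) (hL : (L : ℝ) = lam * c) (hlam : lam < δ)
    (U : Finset X)
    (Udot : Finset X)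
    (hUdot : Udot = Finset.univ.filter (fun v => v ∉ U ∧
      ((1 - lam) * c + 1 ≤
        ((Finset.univ.filter (fun y => E v y ∧ ∃ u ∈ U, E u y)).card : ℝ))))
    (hsize : ((U ∪ Udot).card : ℝ) < α * n) :
    ∃ M : Finset (X × Y), (∀ p ∈ M, E p.1 p.2) ∧
      (∀ v ∈ U ∪ Udot, D ≤ (M.filter (fun p => p.1 = v)).card) ∧
      (∀ y : Y, (∃ v ∈ U ∪ Udot, E v y) → (M.filter (fun p => p.2 = y)).card ≤ 1) := by
  classical
  set W := U ∪ Udot with hW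
  let ι := {a : X × ℕ // a ∈ W ×ˢ Finset.range D}
  let t : ι → Finset Y := fun a => Finset.univ.filter (fun y => E a.1.1 y)
  have hHall : ∀ S : Finset ι, S.card ≤ (S.biUnion t).card := by
    intro S
    set T := S.image (fun a : ι => a.1.1) with hT
    have hTsub : T ⊆ W := by
      intro x hx
      rw [hT, mem_image] at hx
      obtain ⟨a, _, rfl⟩ := hx
      exact (Finset.mem_product.mp a.2).1
    have hTcard : (T.card : ℝ) < α * n :=
      lt_of_le_of_lt (Nat.cast_le.mpr (card_le_card hTsub)) hsize
    have hexpT := hexp T hTcard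
    have hbi : Finset.univ.filter (fun y => ∃ x ∈ T, E x y) ⊆ S.biUnion t := by
      intro y hy
      rw [mem_filter] at hy
      obtain ⟨-, x, hx, hE⟩ := hy
      rw [hT, mem_image] at hx
      obtain ⟨a, ha, rfl⟩ := hx
      exact mem_biUnion.mpr ⟨a, ha, by simp [t, hE]⟩
    have h1 : S.card ≤ D * T.card := by
      have hinj : S.card = (S.image Subtype.val).card :=
        (card_image_of_injective _ Subtype.val_injective).symm
      rw [hinj]
      have hsub : S.image Subtype.val ⊆ T ×ˢ Finset.range D := by
        intro a ha
        rw [mem_image] at ha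
        obtain ⟨b, hb, rfl⟩ := ha
        have h2 := Finset.mem_product.mp b.2
        exact Finset.mem_product.mpr ⟨mem_image.mpr ⟨b, hb, rfl⟩, h2.2⟩
      calc (S.image Subtype.val).card ≤ (T ×ˢ Finset.range D).card := card_le_card hsub
        _ = T.card * D := by rw [card_product, card_range]
        _ = D * T.card := Nat.mul_comm _ _
    have hcast : (S.card : ℝ) ≤ ((S.biUnion t).card : ℝ) := by
      calc (S.card : ℝ) ≤ ((D * T.card : ℕ) : ℝ) := Nat.cast_le.mpr h1
        _ = δ * c * T.card := by push_cast [hD]; ring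
        _ ≤ ((Finset.univ.filter (fun y => ∃ x ∈ T, E x y)).card : ℝ) := hexpT
        _ ≤ ((S.biUnion t).card : ℝ) := Nat.cast_le.mpr (card_le_card hbi)
    exact_mod_cast hcast
  obtain ⟨f, hfinj, hf⟩ :=
    (Finset.all_card_le_biUnion_card_iff_exists_injective t).mp hHall
  have hfE : ∀ a : ι, E a.1.1 (f a) := by
    intro a
    have := hf a
    simpa [t] using this
  refine ⟨Finset.univ.image (fun a : ι => (a.1.1, f a)), ?_, ?_, ?_⟩
  · intro p hp
    rw [mem_image] at hp
    obtain ⟨a, -, rfl⟩ := hp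
    exact hfE a
  · intro v hv
    set A := (Finset.univ : Finset ι).filter (fun a => a.1.1 = v) with hA
    have hAcard : A.card = D := by
      rw [hA]; conv_rhs => rw [← card_range D]
      apply Finset.card_bij' (fun a _ => a.1.2)
        (fun i hi => (⟨(v, i), Finset.mem_product.mpr ⟨hv, hi⟩⟩ : ι))
      case hi =>
        intro a ha
        exact (Finset.mem_product.mp a.2).2
      case hj =>
        intro i hi
        simp
      case left_inv =>
        intro a ha
        rw [mem_filter] at ha
        exact Subtype.ext (Prod.ext ha.2.symm rfl)
      case right_inv =>
        intro i hi
        rfl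
    have himg : A.image (fun a : ι => (a.1.1, f a)) ⊆
        (Finset.univ.image (fun a : ι => (a.1.1, f a))).filter (fun p => p.1 = v) := by
      intro p hp
      rw [mem_image] at hp
      obtain ⟨a, ha, rfl⟩ := hp
      rw [mem_filter]
      rw [hA, mem_filter] at ha
      exact ⟨mem_image.mpr ⟨a, mem_univ a, rfl⟩, ha.2⟩
    have hinjA : (A.image (fun a : ι => (a.1.1, f a))).card = A.card := by
      apply card_image_of_injOn
      intro a _ b _ hab
      exact hfinj (congrArg Prod.snd hab)
    calc D = A.card := hAcard.symm
      _ = (A.image (fun a : ι => (a.1.1, f a))).card := hinjA.symm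
      _ ≤ _ := card_le_card himg
  · intro y _
    apply card_le_one.mpr
    intro p hp q hq
    rw [mem_filter, mem_image] at hp hq
    obtain ⟨⟨a, -, rfl⟩, hpy⟩ := hp
    obtain ⟨⟨b, -, rfl⟩, hqy⟩ := hq
    have : f a = f b := by simp only at hpy hqy; rw [hpy, hqy]
    rw [hfinj this]
end

section
/- Let H be a binary r×n matrix with j ones per column and m ones per row, and let q ∈ ℝⁿ with q ≥ 0 satisfy, for each row i and each t with h_{it}=1: q_t ≤ Σ_{ℓ≠t: h_{iℓ}=1} q_ℓ. Then ‖H^T (Hq)‖² ≥ 4j² Σ_{t=1}^n q_t². -/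
open Finset Matrix
open scoped Classical

theorem stmt_15 (r n j m : ℕ)
    (H : Matrix (Fin r) (Fin n) ℝ)
    (h01 : ∀ i t, H i t = 0 ∨ H i t = 1)
    (hcol : ∀ t, ∑ i, H i t = (j : ℝ))
    (hrow : ∀ i, ∑ t, H i t = (m : ℝ))
    (q : Fin n → ℝ) (hq0 : ∀ i, 0 ≤ q i)
    (hpc : ∀ i t, H i t = 1 →
      q t ≤ ∑ l ∈ Finset.univ.erase t, H i l * q l) :
    4 * (j : ℝ) ^ 2 * ∑ t, (q t) ^ 2 ≤ ∑ t, ((Hᵀ *ᵥ (H *ᵥ q)) t) ^ 2 := by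
  have hA : ∀ t, (Hᵀ *ᵥ (H *ᵥ q)) t = ∑ i, H i t * ∑ l, H i l * q l := by
    intro t
    simp [Matrix.mulVec, dotProduct, Matrix.transpose]
  have hterm : ∀ i t, 0 ≤ H i t * q t := by
    intro i t
    rcases h01 i t with h | h <;> simp [h, hq0 t]
  have hs : ∀ i, 0 ≤ ∑ l, H i l * q l := fun i =>
    Finset.sum_nonneg fun l _ => hterm i l
  have key : ∀ t, 2 * (j : ℝ) * q t ≤ (Hᵀ *ᵥ (H *ᵥ q)) t := by
    intro t
    rw [hA]
    have h1 : ∀ i, H i t * (2 * q t) ≤ H i t * ∑ l, H i l * q l := by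
      intro i
      rcases h01 i t with h | h
      · simp [h]
      · have := hpc i t h
        have hsplit : ∑ l, H i l * q l
            = H i t * q t + ∑ l ∈ Finset.univ.erase t, H i l * q l := by
          rw [← Finset.sum_erase_add Finset.univ _ (Finset.mem_univ t)]
          ring
        rw [h] at hsplit
        simp only [h, one_mul] at *
        rw [hsplit]
        linarith
    calc 2 * (j : ℝ) * q t = ∑ i, H i t * (2 * q t) := by
          rw [← Finset.sum_mul, hcol]; ring
      _ ≤ _ := Finset.sum_le_sum fun i _ => h1 i
  have keysq : ∀ t, 4 * (j : ℝ) ^ 2 * q t ^ 2 ≤ ((Hᵀ *ᵥ (H *ᵥ q)) t) ^ 2 := by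
    intro t
    have h0 : 0 ≤ 2 * (j : ℝ) * q t := by
      have := hq0 t; positivity
    have := mul_self_le_mul_self h0 (key t)
    nlinarith [this]
  calc 4 * (j : ℝ) ^ 2 * ∑ t, (q t) ^ 2 = ∑ t, 4 * (j : ℝ) ^ 2 * q t ^ 2 := by
        rw [Finset.mul_sum]
    _ ≤ _ := Finset.sum_le_sum fun t _ => keysq t
end
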